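/- arXiv:1804.03710 — 2 statements merged into one kernel-verified Lean document; each statement's English description precedes it below -/
import Mathlib

section
/- Let i be in {1,...,n}, let lambda0 be in Pi_l, let nu in a_Z* satisfy <nu+rho, alpha_i^v> <= 0, and set lambda = s_i∘(lambda0 + l*nu). Then <lambda+rho, alpha_i^v> = l*(-<nu+rho, alpha_i^v>) + (l - 1 - <lambda0, alpha_i^v>), and lambda^{(1)} (relative to i) equals lambda0 + l*(s_i∘nu). (Key computation in step (b) of the proof of Theorem 1.2) -/
open Finsupp LaurentPolynomial

noncomputable section

/-- The ring `K = ℤ[t^{1/2}, t^{-1/2}]`: Laurent polynomials over `ℤ` in the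
variable `T = t^{1/2}`. -/
abbrev K : Type := LaurentPolynomial ℤ

/-- The element `t^{1/2}` of `K`. -/
def tHalf : K := T 1

/-- The bar involution of `K`, determined by `t^{1/2} ↦ t^{-1/2}`. -/
def conjK : K →+* K := (LaurentPolynomial.invert (R := ℤ)).toRingHom

/-- `V`: the free `K`-module with basis `{|λ⟩ : λ ∈ a_ℤ^*}` indexed by the weight
lattice `Λ`. -/
abbrev V (Λ : Type) : Type := Λ →₀ K

/-- The basis element `|λ⟩` of `V`. -/
def ket {Λ : Type} (lam : Λ) : V Λ := Finsupp.single lam 1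

/-- The data of (the weight lattice of) a reduced finite crystallographic root
system: the weight lattice `Λ = a_ℤ^*`, the (finite) Weyl group `W = W₀` acting
on `Λ` through `σ`, the simple reflections `s i`, the simple roots `α i`, the
pairings `pair i = ⟨·, α_i^∨⟩` with the simple coroots, the finite set
`posRoots` of pairings `⟨·, α^∨⟩` with the coroots `α^∨` of the positive roots
`α ∈ R⁺`, the half-sum `ρ` of the positive roots (assumed to lie in `Λ`), the
longest element `w0` (of length `posRoots.card`), and the sign character `det`. -/
structure RootData (Λ W : Type) [AddCommGroup Λ] [Group W] [Fintype W] where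
  n : ℕ
  σ : W →* Multiplicative (AddAut Λ)
  s : Fin n → W
  α : Fin n → Λ
  pair : Fin n → Λ →+ ℤ
  posRoots : Finset (Λ →+ ℤ)
  ρ : Λ
  w0 : W
  det : W →* ℤˣ
  /-- `s i` acts on `Λ` as the reflection in the simple root `α i`. -/
  reflect : ∀ (i : Fin n) (lam : Λ), Multiplicative.toAdd (σ (s i)) lam = lam - pair i lam • α i
  /-- crystallographic normalization `⟨α_i, α_i^∨⟩ = 2`. -/
  pair_alpha_self : ∀ i : Fin n, pair i (α i) = 2
  /-- the simple reflections are involutions. -/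
  s_sq : ∀ i : Fin n, s i * s i = 1
  /-- `W₀` is generated by the simple reflections. -/
  gen_s : Subgroup.closure (Set.range s) = ⊤
  /-- `⟨ρ, α_i^∨⟩ = 1` for every simple coroot. -/
  pair_rho : ∀ i : Fin n, pair i ρ = 1
  /-- each simple coroot is the coroot of a positive root. -/
  pair_mem : ∀ i : Fin n, pair i ∈ posRoots
  /-- the Weyl group permutes the (co)roots up to sign. -/
  roots_perm : ∀ (w : W), ∀ f ∈ posRoots,
    (∃ g ∈ posRoots, ∀ lam, f (Multiplicative.toAdd (σ w) lam) = g lam) ∨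
    (∃ g ∈ posRoots, ∀ lam, f (Multiplicative.toAdd (σ w) lam) = - g lam)
  /-- `w0` sends every positive root to a negative root (so `w0` is the longest
  element, of length `posRoots.card`). -/
  w0_neg : ∀ f ∈ posRoots, ∃ g ∈ posRoots, ∀ lam, f (Multiplicative.toAdd (σ w0) lam) = - g lam
  /-- `det` is the sign character. -/
  det_s : ∀ i : Fin n, det (s i) = -1

namespace RootData

variable {Λ W : Type} [AddCommGroup Λ] [Group W] [Fintype W]

/-- The dot action `w ∘ λ = w(λ + ρ) - ρ`. -/
def dot (D : RootData Λ W) (w : W) (lam : Λ) : Λ := Multiplicative.toAdd (D.σ w) (lam + D.ρ) - D.ρ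

/-- `λ^{(1)} = λ - j • α_i`, where `⟨λ + ρ, α_i^∨⟩ = k l + j` with `j ∈ {0, …, l-1}`
(relative to the index `i`). -/
def lamOne (D : RootData Λ W) (l : ℕ) (i : Fin D.n) (lam : Λ) : Λ :=
  lam - (D.pair i (lam + D.ρ) % (l : ℤ)) • D.α i

/-- A weight `λ` is dominant when `⟨λ + ρ, α_i^∨⟩ > 0` for all `i`. -/
def dominant (D : RootData Λ W) (lam : Λ) : Prop :=
  ∀ i : Fin D.n, 0 < D.pair i (lam + D.ρ)

/-- `λ₀ ∈ Π_l`: an `l`-restricted dominant weight. -/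
def restricted (D : RootData Λ W) (l : ℕ) (lam : Λ) : Prop :=
  D.dominant lam ∧ ∀ i : Fin D.n, D.pair i lam ≤ (l : ℤ) - 1

/-- The `K`-submodule `I` of `V` spanned by the straightening elements
(a), (b), (c). -/
def Idl (D : RootData Λ W) (l : ℕ) : Submodule K (V Λ) :=
  Submodule.span K
    ({x | ∃ (i : Fin D.n) (lam : Λ),
        (∃ k : ℤ, 0 ≤ k ∧ D.pair i (lam + D.ρ) = k * l) ∧
        x = ket (D.dot (D.s i) lam) + ket lam} ∪
     {x | ∃ (i : Fin D.n) (lam : Λ),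
        0 < D.pair i (lam + D.ρ) ∧ D.pair i (lam + D.ρ) < (l : ℤ) ∧
        x = ket (D.dot (D.s i) lam) + tHalf • ket lam} ∪
     {x | ∃ (i : Fin D.n) (lam : Λ),
        (l : ℤ) < D.pair i (lam + D.ρ) ∧ ¬ ((l : ℤ) ∣ D.pair i (lam + D.ρ)) ∧
        x = ket (D.dot (D.s i) lam) + tHalf • ket (D.dot (D.s i) (D.lamOne l i lam)) +
            ket (D.lamOne l i lam) + tHalf • ket lam})

/-- The operator `X^μ · : V → V` of the level `-(l+h)` action:
`X^μ · |γ⟩ = |γ - l w0(μ)⟩`. -/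
def opX (D : RootData Λ W) (l : ℕ) (mu : Λ) : V Λ →ₗ[K] V Λ :=
  Finsupp.lmapDomain K K (fun gam => gam - l • Multiplicative.toAdd (D.σ D.w0) mu)

/-- The level `-(l+h)` action of an element `g` of the group algebra `K[X]`
(with `K`-coefficients) on `V`. -/
def actKX (D : RootData Λ W) (l : ℕ) (g : Λ →₀ K) (v : V Λ) : V Λ :=
  g.sum fun mu c => c • (D.opX l mu v)

/-- The level `-(l+h)` action of an element `g` of `ℤ[X]` on `V`. -/
def actZX (D : RootData Λ W) (l : ℕ) (g : Λ →₀ ℤ) (v : V Λ) : V Λ :=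
  g.sum fun mu c => c • (D.opX l mu v)

/-- `N_λ = #{α ∈ R⁺ : ⟨λ + ρ, α^∨⟩ ∈ lℤ}`. -/
def Ncount (D : RootData Λ W) (l : ℕ) (lam : Λ) : ℕ :=
  (D.posRoots.filter (fun f => (l : ℤ) ∣ f (lam + D.ρ))).card

/-- The coefficient `(-1)^{l(w0)} (t^{-1/2})^{l(w0) - N_λ}` appearing in the bar
involution, where `l(w0) = Card R⁺`. -/
def barCoef (D : RootData Λ W) (l : ℕ) (lam : Λ) : K :=
  ((-1 : K) ^ D.posRoots.card) * T ((D.Ncount l lam : ℤ) - (D.posRoots.card : ℤ))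

/-- The bar involution of `V`:
`bar(c|λ⟩) = c̄ (-1)^{l(w0)} (t^{-1/2})^{l(w0)-N_λ} |w0 ∘ λ⟩`. -/
def barV (D : RootData Λ W) (l : ℕ) (v : V Λ) : V Λ :=
  v.sum fun lam c => (conjK c * D.barCoef l lam) • ket (D.dot D.w0 lam)

/-- `V⁺`: the `ℤ[t^{1/2}]`-span of the `|μ⟩` inside `V`, i.e. the elements all
of whose coefficients are polynomials in `t^{1/2}`. -/
def inVplus {Λ : Type} (b : V Λ) : Prop :=
  ∀ (mu : Λ) (m : ℤ), m < 0 → (b mu).coeff m = 0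

/-- Membership in `I + t^{1/2} V⁺`. -/
def inIplus (D : RootData Λ W) (l : ℕ) (x : V Λ) : Prop :=
  ∃ a ∈ D.Idl l, ∃ b : V Λ, inVplus b ∧ x = a + tHalf • b

/-- The Weyl numerator `∑_{w ∈ W₀} det(w) X^{w ν}` in `K[X]`. -/
def weylNumer (D : RootData Λ W) (nu : Λ) : AddMonoidAlgebra K Λ :=
  ∑ w : W, ((D.det w : ℤˣ) : ℤ) • AddMonoidAlgebra.single (Multiplicative.toAdd (D.σ w) nu) (1 : K)

/-- `g` is the Weyl character `s_ν ∈ ℤ[X]^{W₀} ⊆ K[X]`: it has integer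
coefficients, is `W₀`-invariant, and satisfies the Weyl character formula
`(∑_w det(w) X^{wρ}) · s_ν = ∑_w det(w) X^{w(ν+ρ)}`. -/
def IsWeylChar (D : RootData Λ W) (nu : Λ) (g : AddMonoidAlgebra K Λ) : Prop :=
  (∀ mu : Λ, ∃ z : ℤ, g.coeff mu = (z : K)) ∧
  (∀ (w : W) (mu : Λ), g.coeff (Multiplicative.toAdd (D.σ w) mu) = g.coeff mu) ∧
  D.weylNumer D.ρ * g = D.weylNumer (nu + D.ρ)

end RootData

end

/-- key computation in step (b) of the proof of Theorem 1.2: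
for `λ₀ ∈ Π_l`, `⟨ν+ρ, α_i^∨⟩ ≤ 0` and `λ = s_i∘(λ₀ + lν)`, one has
`⟨λ+ρ, α_i^∨⟩ = l(-⟨ν+ρ, α_i^∨⟩) + (l - 1 - ⟨λ₀, α_i^∨⟩)` and
`λ^{(1)} = λ₀ + l(s_i∘ν)` (with `λ^{(1)}` relative to `i`). -/
theorem statement6 {Λ W : Type} [AddCommGroup Λ] [Group W] [Fintype W]
    (D : RootData Λ W) (l : ℕ) (hl : 0 < l) (i : Fin D.n) (lam0 nu : Λ)
    (h0 : D.restricted l lam0) (hnu : D.pair i (nu + D.ρ) ≤ 0) :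
    D.pair i (D.dot (D.s i) (lam0 + l • nu) + D.ρ) =
        (l : ℤ) * (-(D.pair i (nu + D.ρ))) + ((l : ℤ) - 1 - D.pair i lam0) ∧
    D.lamOne l i (D.dot (D.s i) (lam0 + l • nu)) = lam0 + l • D.dot (D.s i) nu := by
  obtain ⟨hdom, hres⟩ := h0
  have ha0 : 0 ≤ D.pair i lam0 := by
    have h := hdom i
    rw [map_add, D.pair_rho] at h
    omega
  have ha1 : D.pair i lam0 ≤ (l : ℤ) - 1 := hres i
  have key : ∀ x : Λ, D.pair i (Multiplicative.toAdd (D.σ (D.s i)) x) = - D.pair i x := by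
    intro x
    rw [D.reflect, map_sub, map_zsmul, D.pair_alpha_self, smul_eq_mul]
    ring
  have hpair : D.pair i (D.dot (D.s i) (lam0 + l • nu) + D.ρ) =
      (l : ℤ) * (-(D.pair i (nu + D.ρ))) + ((l : ℤ) - 1 - D.pair i lam0) := by
    rw [RootData.dot, sub_add_cancel, key]
    simp only [map_add, map_nsmul, D.pair_rho, nsmul_eq_mul]
    ring
  refine ⟨hpair, ?_⟩
  have hmod : D.pair i (D.dot (D.s i) (lam0 + l • nu) + D.ρ) % (l : ℤ) =
      (l : ℤ) - 1 - D.pair i lam0 := by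
    rw [hpair, add_comm, Int.add_mul_emod_self_left,
      Int.emod_eq_of_lt (by omega) (by omega)]
  rw [RootData.lamOne, hmod, RootData.dot, RootData.dot, D.reflect, D.reflect]
  simp only [map_add, map_nsmul, D.pair_rho, nsmul_eq_mul]
  generalize D.pair i lam0 = a at *
  generalize D.pair i nu = b
  generalize D.α i = al
  module
end

section
/- For every lambda0 in Pi_l, every nu in a_Z*, and every i in {1,...,n}, the element |lambda0 + l*nu> + |lambda0 + l*(s_i∘nu)> of V belongs to I + t^{1/2}V+. (Equation (1.16) of the paper, the mod t^{1/2} straightening identity) -/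
open Finsupp LaurentPolynomial

section Aux

variable {Λ W : Type} [AddCommGroup Λ] [Group W] [Fintype W]

lemma inVplus_zero : RootData.inVplus (0 : V Λ) := by
  intro mu m hm; simp

lemma inVplus_ket (lam : Λ) : RootData.inVplus (ket lam) := by
  intro mu m hm
  classical
  rw [ket, Finsupp.single_apply]
  split
  · show (AddMonoidAlgebra.single 0 1 : K).coeff m = 0
    rw [AddMonoidAlgebra.coeff_single, Finsupp.single_apply]
    split
    · omega
    · rfl
  · rfl

lemma inVplus_add {b1 b2 : V Λ} (h1 : RootData.inVplus b1) (h2 : RootData.inVplus b2) :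
    RootData.inVplus (b1 + b2) := by
  intro mu m hm
  rw [Finsupp.add_apply, AddMonoidAlgebra.coeff_add, Finsupp.add_apply, h1 mu m hm, h2 mu m hm, add_zero]

lemma inVplus_neg {b : V Λ} (h : RootData.inVplus b) : RootData.inVplus (-b) := by
  intro mu m hm
  rw [Finsupp.neg_apply, AddMonoidAlgebra.coeff_neg, Finsupp.neg_apply, h mu m hm, neg_zero]

lemma dot_s_eq (D : RootData Λ W) (i : Fin D.n) (lam : Λ) :
    D.dot (D.s i) lam = lam - D.pair i (lam + D.ρ) • D.α i := by
  rw [RootData.dot, D.reflect]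
  abel

lemma pair_add_smul (D : RootData Λ W) (i : Fin D.n) (lam : Λ) (z : ℤ) :
    D.pair i (lam + z • D.α i) = D.pair i lam + 2 * z := by
  rw [map_add, map_zsmul, D.pair_alpha_self, smul_eq_mul]
  ring

/-- Key lemma: the case `⟨ν+ρ, α_i^∨⟩ = c ≥ 1` of the straightening identity,
stated for a general weight `lam` with `⟨lam+ρ, α_i^∨⟩ = a + l(c-1)`, `1 ≤ a ≤ l`. -/
lemma key_lemma (D : RootData Λ W) (l : ℕ) (hl : 0 < l) (i : Fin D.n) (lam : Λ)
    (c : ℤ) (hc : 1 ≤ c)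
    (ha1 : 1 ≤ D.pair i (lam + D.ρ) - l * (c - 1))
    (ha2 : D.pair i (lam + D.ρ) - l * (c - 1) ≤ l) :
    D.inIplus l (ket lam + ket (lam - ((l : ℤ) * c) • D.α i)) := by
  set p := D.pair i (lam + D.ρ) with hp
  rcases eq_or_lt_of_le ha2 with hal | hal
  · -- a = l, so p = c * l : use relation (a)
    have hpc : p = c * (l : ℤ) := by linarith
    refine ⟨ket (D.dot (D.s i) lam) + ket lam, ?_, 0, inVplus_zero, ?_⟩
    · apply Submodule.subset_span
      exact Set.mem_union_left _ (Set.mem_union_left _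
        ⟨i, lam, ⟨c, by linarith, hpc⟩, rfl⟩)
    · rw [dot_s_eq, smul_zero, add_zero, ← hp, hpc, mul_comm c (l : ℤ)]
      abel
  · -- a < l : use relation (c) for lam' = lam + (l - a) • α i
    set a := p - l * (c - 1) with ha
    set lam' := lam + ((l : ℤ) - a) • D.α i with hlam'
    have hq : D.pair i (lam' + D.ρ) = (l : ℤ) * (c + 1) - a := by
      have : lam' + D.ρ = (lam + D.ρ) + ((l : ℤ) - a) • D.α i := by
        rw [hlam']; abel
      rw [this, pair_add_smul, ← hp]
      have : p = a + l * (c - 1) := by rw [ha]; ring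
      rw [this]; ring
    have hq1 : (l : ℤ) < D.pair i (lam' + D.ρ) := by
      rw [hq]; nlinarith
    have hq2 : ¬ ((l : ℤ) ∣ D.pair i (lam' + D.ρ)) := by
      rw [hq]
      intro ⟨k, hk⟩
      have : a = (l : ℤ) * (c + 1 - k) := by rw [mul_sub]; omega
      have h1 : (l : ℤ) ∣ a := ⟨c + 1 - k, this⟩
      have := Int.le_of_dvd (by omega) h1
      omega
    have hmod : D.pair i (lam' + D.ρ) % (l : ℤ) = (l : ℤ) - a := by
      rw [hq]
      have : (l : ℤ) * (c + 1) - a = ((l : ℤ) - a) + (l : ℤ) * c := by ring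
      rw [this, Int.add_mul_emod_self_left]
      exact Int.emod_eq_of_lt (by omega) (by omega)
    have hlamOne : D.lamOne l i lam' = lam := by
      rw [RootData.lamOne, hmod, hlam']
      abel
    have hdot' : D.dot (D.s i) lam' = lam - ((l : ℤ) * c) • D.α i := by
      rw [dot_s_eq, hq, hlam']
      module
    refine ⟨ket (D.dot (D.s i) lam') + tHalf • ket (D.dot (D.s i) (D.lamOne l i lam')) +
        ket (D.lamOne l i lam') + tHalf • ket lam', ?_,
        -(ket (D.dot (D.s i) (D.lamOne l i lam')) + ket lam'), ?_, ?_⟩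
    · apply Submodule.subset_span
      exact Set.mem_union_right _ ⟨i, lam', hq1, hq2, rfl⟩
    · exact inVplus_neg (inVplus_add (inVplus_ket _) (inVplus_ket _))
    · rw [hlamOne, hdot', smul_neg, smul_add]
      abel

end Aux

/-- equation (1.16) of the paper, the mod `t^{1/2}`
straightening identity: for every `λ₀ ∈ Π_l`, every `ν ∈ a_ℤ^*` and every `i`,
`|λ₀ + lν⟩ + |λ₀ + l(s_i∘ν)⟩ ∈ I + t^{1/2}V⁺`. -/
theorem statement8 {Λ W : Type} [AddCommGroup Λ] [Group W] [Fintype W]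
    (D : RootData Λ W) (l : ℕ) (hl : 0 < l) (lam0 : Λ)
    (h0 : D.restricted l lam0) (nu : Λ) (i : Fin D.n) :
    D.inIplus l (ket (lam0 + l • nu) + ket (lam0 + l • D.dot (D.s i) nu)) := by
  obtain ⟨hdom, hres⟩ := h0
  set a0 := D.pair i (lam0 + D.ρ) with ha0
  have ha01 : 1 ≤ a0 := hdom i
  have ha02 : a0 ≤ (l : ℤ) := by
    have h1 := hres i
    have h2 : a0 = D.pair i lam0 + 1 := by rw [ha0, map_add, D.pair_rho]
    omega
  set c := D.pair i (nu + D.ρ) with hc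
  have hnsmul : ∀ x : Λ, (l : ℕ) • x = (l : ℤ) • x := fun x => (natCast_zsmul x l).symm
  have hdotnu : lam0 + l • D.dot (D.s i) nu = (lam0 + l • nu) - ((l : ℤ) * c) • D.α i := by
    rw [dot_s_eq, ← hc, smul_sub, hnsmul (c • D.α i), smul_smul]
    abel
  have hpairlam : D.pair i ((lam0 + l • nu) + D.ρ) = a0 + (l : ℤ) * (c - 1) := by
    have : (lam0 + l • nu) + D.ρ = (lam0 + D.ρ) + (l : ℤ) • nu := by
      rw [← hnsmul]; abel
    rw [this, map_add, map_zsmul, ← ha0, smul_eq_mul]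
    have : D.pair i nu = c - 1 := by
      rw [hc, map_add, D.pair_rho]; ring
    rw [this]
  rcases lt_trichotomy c 0 with hclt | hceq | hcgt
  · -- c ≤ -1 : apply key lemma to μ = lam0 + l • (s_i ∘ ν) with c' = -c
    have h := key_lemma D l hl i (lam0 + l • D.dot (D.s i) nu) (-c) (by omega) ?_ ?_
    · have he : (lam0 + l • D.dot (D.s i) nu) - ((l : ℤ) * (-c)) • D.α i
          = lam0 + l • nu := by
        rw [hdotnu]
        rw [show ((l : ℤ) * (-c)) = -((l : ℤ) * c) by ring, neg_smul]
        abel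
      rw [he] at h
      rw [add_comm]
      exact h
    · have : D.pair i ((lam0 + l • D.dot (D.s i) nu) + D.ρ)
          = a0 + (l : ℤ) * (-c - 1) := by
        have h2 : (lam0 + l • D.dot (D.s i) nu) + D.ρ
            = ((lam0 + l • nu) + D.ρ) + (-((l : ℤ) * c)) • D.α i := by
          rw [hdotnu, neg_smul]; abel
        rw [h2, pair_add_smul, hpairlam]; ring
      rw [this]; nlinarith
    · have : D.pair i ((lam0 + l • D.dot (D.s i) nu) + D.ρ)
          = a0 + (l : ℤ) * (-c - 1) := by
        have h2 : (lam0 + l • D.dot (D.s i) nu) + D.ρ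
            = ((lam0 + l • nu) + D.ρ) + (-((l : ℤ) * c)) • D.α i := by
          rw [hdotnu, neg_smul]; abel
        rw [h2, pair_add_smul, hpairlam]; ring
      rw [this]; nlinarith
  · -- c = 0 : the two kets coincide
    set lam := lam0 + l • nu with hlam
    have hmu : lam0 + l • D.dot (D.s i) nu = lam := by
      rw [hdotnu, hceq, mul_zero, zero_smul, sub_zero]
    rw [hmu]
    have hplam : D.pair i (lam + D.ρ) = a0 - (l : ℤ) := by
      rw [hpairlam, hceq]; ring
    rcases eq_or_lt_of_le ha02 with haeq | halt
    · -- a0 = l : relation (a) with k = 0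
      refine ⟨ket (D.dot (D.s i) lam) + ket lam, ?_, 0, inVplus_zero, ?_⟩
      · apply Submodule.subset_span
        exact Set.mem_union_left _ (Set.mem_union_left _
          ⟨i, lam, ⟨0, le_refl 0, by rw [hplam]; omega⟩, rfl⟩)
      · rw [dot_s_eq, hplam, show a0 - (l : ℤ) = 0 by omega, zero_smul, sub_zero,
          smul_zero, add_zero]
    · -- a0 < l : use 2 × relation (b) for lam' = s_i ∘ lam
      set lam' := D.dot (D.s i) lam with hlam'
      have hlam'e : lam' = lam - (a0 - (l : ℤ)) • D.α i := by
        rw [hlam', dot_s_eq, hplam]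
      have hq : D.pair i (lam' + D.ρ) = (l : ℤ) - a0 := by
        have h2 : lam' + D.ρ = (lam + D.ρ) + (-(a0 - (l : ℤ))) • D.α i := by
          rw [hlam'e, neg_smul]; abel
        rw [h2, pair_add_smul, hplam]; ring
      have hdot2 : D.dot (D.s i) lam' = lam := by
        rw [dot_s_eq, hq, hlam'e]
        module
      refine ⟨(2 : K) • (ket (D.dot (D.s i) lam') + tHalf • ket lam'),
        Submodule.smul_mem _ _ ?_, -(ket lam' + ket lam'),
        inVplus_neg (inVplus_add (inVplus_ket _) (inVplus_ket _)), ?_⟩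
      · apply Submodule.subset_span
        exact Set.mem_union_left _ (Set.mem_union_right _
          ⟨i, lam', by rw [hq]; omega, by rw [hq]; omega, rfl⟩)
      · rw [hdot2]
        module
  · -- c ≥ 1 : apply key lemma directly
    have h := key_lemma D l hl i (lam0 + l • nu) c hcgt
      (by rw [hpairlam]; omega) (by rw [hpairlam]; omega)
    rw [← hdotnu] at h
    exact h
end
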